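/- Fix N, d ∈ ℕ. Let w_i ∈ ℝ^N converge to w ∈ ℝ^N, and let p_i be polynomials in N variables over ℂ of total degree ≤ d, with p_i being w_i-homogeneous for each i, whose coefficients converge to the coefficients of a nonzero polynomial p of total degree ≤ d. Then for all sufficiently large i, the polynomial p is w_i-homogeneous. -/
import Mathlib


open Filter Topology

/-- A polynomial is `w`-homogeneous if all monomials in its support have the
same weighted degree with respect to the weight vector `w`. -/
def WeightedHomogeneous {N : ℕ} (w : Fin N → ℝ) (p : MvPolynomial (Fin N) ℂ) : Prop :=
  ∃ μ : ℝ, ∀ α ∈ p.support, (∑ j, (α j : ℝ) * w j) = μ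

theorem stmt14 (N d : ℕ) (w : ℕ → Fin N → ℝ) (winf : Fin N → ℝ)
    (hw : Tendsto w atTop (𝓝 winf))
    (p : ℕ → MvPolynomial (Fin N) ℂ) (pinf : MvPolynomial (Fin N) ℂ)
    (hdeg : ∀ i, (p i).totalDegree ≤ d) (hdeginf : pinf.totalDegree ≤ d)
    (hhom : ∀ i, WeightedHomogeneous (w i) (p i))
    (hcoeff : ∀ α : Fin N →₀ ℕ,
      Tendsto (fun i => (p i).coeff α) atTop (𝓝 (pinf.coeff α)))
    (hne : pinf ≠ 0) :
    ∀ᶠ i in atTop, WeightedHomogeneous (w i) pinf := by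
  have h : ∀ᶠ i in atTop, ∀ α ∈ pinf.support, α ∈ (p i).support := by
    rw [eventually_all_finset pinf.support]
    intro α hα
    have hne' : pinf.coeff α ≠ 0 := MvPolynomial.mem_support_iff.mp hα
    filter_upwards [(hcoeff α).eventually_ne hne'] with i hi
    exact MvPolynomial.mem_support_iff.mpr hi
  filter_upwards [h] with i hi
  obtain ⟨μ, hμ⟩ := hhom i
  exact ⟨μ, fun α hα => hμ α (hi α hα)⟩
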